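/- Let S = M_{d_1}(ℂ) ⊕ ⋯ ⊕ M_{d_k}(ℂ). The kernel of the map D : S⊗S → DDer(S), x ↦ d_x, namely the set {x ∈ S⊗S : x·(1⊗y) = (y⊗1)·x for all y ∈ S}, is spanned by the elements g^i_{ab} := ∑_{p=1}^{d_i} e^i_{pb} ⊗ e^i_{ap} for 1 ≤ i ≤ k and 1 ≤ a,b ≤ d_i; these elements are linearly independent, so the kernel has ℂ-dimension ∑_{i=1}^k d_i² and is isomorphic as a ℂ-vector space to M_{d_1}(ℂ) ⊕ ⋯ ⊕ M_{d_k}(ℂ). -/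

import Mathlib

open TensorProduct

set_option synthInstance.maxHeartbeats 1000000
set_option maxHeartbeats 1000000

noncomputable section

/-- The finite dimensional semisimple algebra `S = M_{d 0}(ℂ) ⊕ ⋯ ⊕ M_{d (k-1)}(ℂ)`. -/
abbrev MatS (k : ℕ) (d : Fin k → ℕ) : Type :=
  ∀ i : Fin k, Matrix (Fin (d i)) (Fin (d i)) ℂ

variable (k : ℕ) (d : Fin k → ℕ)

/-- `θ` is a double derivation for the outer bimodule structure on `S ⊗ S`. -/
def IsDD (θ : MatS k d →ₗ[ℂ] MatS k d ⊗[ℂ] MatS k d) : Prop :=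
  ∀ a b : MatS k d,
    θ (a * b) = (a ⊗ₜ[ℂ] (1 : MatS k d)) * θ b + θ a * ((1 : MatS k d) ⊗ₜ[ℂ] b)

/-- The space of double derivations `DDer(S)`. -/
def DDer : Submodule ℂ (MatS k d →ₗ[ℂ] MatS k d ⊗[ℂ] MatS k d) where
  carrier := {θ | IsDD k d θ}
  add_mem' := by
    intro θ η hθ hη a b
    simp only [LinearMap.add_apply, hθ a b, hη a b, mul_add, add_mul]
    abel
  zero_mem' := by intro a b; simp
  smul_mem' := by
    intro c θ hθ a b
    simp only [LinearMap.smul_apply, hθ a b, smul_add, mul_smul_comm, smul_mul_assoc]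

/-- The map `u ↦ (1 ⊗ s) * u * (t ⊗ 1)`, realizing the inner bimodule action
`(s·θ·t)(u) = θ(u)' t ⊗ s θ(u)''` after composition with `θ`. -/
def innerMap (s t : MatS k d) : MatS k d ⊗[ℂ] MatS k d →ₗ[ℂ] MatS k d ⊗[ℂ] MatS k d :=
  (LinearMap.mulRight ℂ (t ⊗ₜ[ℂ] (1 : MatS k d))).comp
    (LinearMap.mulLeft ℂ ((1 : MatS k d) ⊗ₜ[ℂ] s))

lemma innerMap_isDD (s t : MatS k d) (θ : MatS k d →ₗ[ℂ] MatS k d ⊗[ℂ] MatS k d)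
    (hθ : IsDD k d θ) : IsDD k d ((innerMap k d s t).comp θ) := by
  intro a b
  have h1 : ((1 : MatS k d) ⊗ₜ[ℂ] s) * (a ⊗ₜ[ℂ] (1 : MatS k d))
      = (a ⊗ₜ[ℂ] (1 : MatS k d)) * ((1 : MatS k d) ⊗ₜ[ℂ] s) := by
    simp [Algebra.TensorProduct.tmul_mul_tmul]
  have h2 : ((1 : MatS k d) ⊗ₜ[ℂ] b) * (t ⊗ₜ[ℂ] (1 : MatS k d))
      = (t ⊗ₜ[ℂ] (1 : MatS k d)) * ((1 : MatS k d) ⊗ₜ[ℂ] b) := by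
    simp [Algebra.TensorProduct.tmul_mul_tmul]
  simp only [LinearMap.comp_apply, hθ a b, innerMap, LinearMap.mulLeft_apply,
    LinearMap.mulRight_apply, mul_add, add_mul]
  congr 1
  · simp only [mul_assoc]
    rw [← mul_assoc, h1, mul_assoc]
  · simp only [mul_assoc]
    rw [h2]

/-- The inner `S`-bimodule action on `DDer(S)`:  `(s·θ·t)(u) = θ(u)' t ⊗ s θ(u)''`. -/
def innerDD (s t : MatS k d) (θ : DDer k d) : DDer k d :=
  ⟨(innerMap k d s t).comp θ.1, innerMap_isDD k d s t θ.1 θ.2⟩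

/-- The matrix unit `e^i_{pq}` of `S`. -/
def E (i : Fin k) (p q : Fin (d i)) : MatS k d :=
  Pi.single i (Matrix.single p q 1)

/-- The inner double derivation `d_x(y) = x (1 ⊗ y) - (y ⊗ 1) x`. -/
def dIn (x : MatS k d ⊗[ℂ] MatS k d) : MatS k d →ₗ[ℂ] MatS k d ⊗[ℂ] MatS k d :=
  (LinearMap.mulLeft ℂ x).comp (TensorProduct.mk ℂ (MatS k d) (MatS k d) 1)
    - (LinearMap.mulRight ℂ x).comp ((TensorProduct.mk ℂ (MatS k d) (MatS k d)).flip 1)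

lemma dIn_isDD (x : MatS k d ⊗[ℂ] MatS k d) : IsDD k d (dIn k d x) := by
  intro a b
  simp only [dIn, LinearMap.sub_apply, LinearMap.comp_apply, TensorProduct.mk_apply,
    LinearMap.flip_apply, LinearMap.mulLeft_apply, LinearMap.mulRight_apply, mul_sub, sub_mul]
  have h1 : ((1 : MatS k d) ⊗ₜ[ℂ] (a * b)) = ((1 : MatS k d) ⊗ₜ[ℂ] a) * ((1 : MatS k d) ⊗ₜ[ℂ] b) := by
    simp [Algebra.TensorProduct.tmul_mul_tmul]
  have h2 : ((a * b) ⊗ₜ[ℂ] (1 : MatS k d)) = (a ⊗ₜ[ℂ] (1 : MatS k d)) * (b ⊗ₜ[ℂ] (1 : MatS k d)) := by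
    simp [Algebra.TensorProduct.tmul_mul_tmul]
  have h3 : (a ⊗ₜ[ℂ] (1 : MatS k d)) * ((1 : MatS k d) ⊗ₜ[ℂ] b) = a ⊗ₜ[ℂ] b := by
    simp [Algebra.TensorProduct.tmul_mul_tmul]
  have h4 : ((1 : MatS k d) ⊗ₜ[ℂ] a) * (b ⊗ₜ[ℂ] (1 : MatS k d)) = b ⊗ₜ[ℂ] a := by
    simp [Algebra.TensorProduct.tmul_mul_tmul]
  rw [h1, h2]
  simp only [mul_assoc]
  abel


/-- The kernel of the map `D : S ⊗ S → DDer(S)`, `x ↦ d_x`. -/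
def Kker (k : ℕ) (d : Fin k → ℕ) : Submodule ℂ (MatS k d ⊗[ℂ] MatS k d) where
  carrier := {x | ∀ y : MatS k d,
    x * ((1 : MatS k d) ⊗ₜ[ℂ] y) = (y ⊗ₜ[ℂ] (1 : MatS k d)) * x}
  add_mem' := by
    intro x x' hx hx' y
    simp only [add_mul, mul_add, hx y, hx' y]
  zero_mem' := by intro y; simp
  smul_mem' := by
    intro c x hx y
    simp only [smul_mul_assoc, mul_smul_comm, hx y]

noncomputable instance (k : ℕ) (d : Fin k → ℕ) : AddCommGroup ↥(Kker k d) :=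
  Module.addCommMonoidToAddCommGroup ℂ

/-- The element `g^i_{ab} = ∑_p e^i_{pb} ⊗ e^i_{ap}`. -/
def g (k : ℕ) (d : Fin k → ℕ) (i : Fin k) (a b : Fin (d i)) : MatS k d ⊗[ℂ] MatS k d :=
  ∑ p : Fin (d i), (E k d i p b) ⊗ₜ[ℂ] (E k d i a p)

section Aux

variable {k : ℕ} {d : Fin k → ℕ}

/-- index type for the basis of `MatS k d` -/
abbrev KI (k : ℕ) (d : Fin k → ℕ) := Σ i : Fin k, Fin (d i) × Fin (d i)

lemma E_mul_same (i : Fin k) (p q u v : Fin (d i)) :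
    E k d i p q * E k d i u v = if q = u then E k d i p v else 0 := by
  classical
  rw [E, E, E, ← Pi.single_mul]
  by_cases h : q = u
  · subst h; simp [Matrix.single_mul_single_same]
  · simp [Matrix.single_mul_single_of_ne (h := h), h]

lemma E_mul_ne {i j : Fin k} (h : i ≠ j) (p q : Fin (d i)) (u v : Fin (d j)) :
    E k d i p q * E k d j u v = 0 := by
  funext m
  simp only [E, Pi.mul_apply, Pi.zero_apply]
  rcases eq_or_ne m i with rfl | hm
  · rw [Pi.single_eq_of_ne h, mul_zero]
  · rw [Pi.single_eq_of_ne hm, zero_mul]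

noncomputable def basisS (k : ℕ) (d : Fin k → ℕ) : Module.Basis (KI k d) ℂ (MatS k d) :=
  Pi.basis fun i => Matrix.stdBasis ℂ (Fin (d i)) (Fin (d i))

lemma basisS_apply (i : Fin k) (p q : Fin (d i)) :
    basisS k d ⟨i, (p, q)⟩ = E k d i p q := by
  rw [basisS, Pi.basis_apply]
  simp [E, Matrix.stdBasis_eq_single]

noncomputable def B2 (k : ℕ) (d : Fin k → ℕ) :
    Module.Basis (KI k d × KI k d) ℂ (MatS k d ⊗[ℂ] MatS k d) :=
  (basisS k d).tensorProduct (basisS k d)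

lemma B2_apply (t s : KI k d) : B2 k d (t, s) = basisS k d t ⊗ₜ[ℂ] basisS k d s :=
  Module.Basis.tensorProduct_apply _ _ _ _

lemma repr_g (i : Fin k) (a b : Fin (d i)) :
    (B2 k d).repr (g k d i a b)
      = ∑ p : Fin (d i), Finsupp.single ((⟨i, (p, b)⟩ : KI k d), (⟨i, (a, p)⟩ : KI k d)) 1 := by
  rw [g, map_sum]
  refine Finset.sum_congr rfl fun p _ => ?_
  rw [← basisS_apply, ← basisS_apply, ← B2_apply, Module.Basis.repr_self]


lemma reprL (x : MatS k d ⊗[ℂ] MatS k d) (j : Fin k) (u s r : Fin (d j)) (t₁ : KI k d) :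
    (B2 k d).repr (x * ((1 : MatS k d) ⊗ₜ[ℂ] E k d j u s)) (t₁, ⟨j, (r, s)⟩)
      = (B2 k d).repr x (t₁, ⟨j, (r, u)⟩) := by
  have h : (Finsupp.lapply ((t₁, ⟨j, (r, s)⟩) : KI k d × KI k d) : _ →ₗ[ℂ] ℂ)
        ∘ₗ ((B2 k d).repr : MatS k d ⊗[ℂ] MatS k d ≃ₗ[ℂ] _).toLinearMap
        ∘ₗ LinearMap.mulRight ℂ ((1 : MatS k d) ⊗ₜ[ℂ] E k d j u s)
      = (Finsupp.lapply (t₁, ⟨j, (r, u)⟩) : _ →ₗ[ℂ] ℂ)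
        ∘ₗ ((B2 k d).repr : MatS k d ⊗[ℂ] MatS k d ≃ₗ[ℂ] _).toLinearMap := by
    apply Module.Basis.ext (B2 k d)
    rintro ⟨t₁', ⟨j', r', s'⟩⟩
    simp only [LinearMap.coe_comp, Function.comp_apply, LinearMap.mulRight_apply,
      LinearEquiv.coe_coe, Finsupp.lapply_apply]
    rw [B2_apply, Algebra.TensorProduct.tmul_mul_tmul, mul_one]
    rw [show basisS k d ⟨j', (r', s')⟩ = E k d j' r' s' from basisS_apply j' r' s']
    rcases eq_or_ne j' j with rfl | hj
    · rw [E_mul_same]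
      by_cases hsu : s' = u
      · subst hsu
        rw [if_pos rfl, ← basisS_apply j' r' s, ← B2_apply, Module.Basis.repr_self,
          ← basisS_apply j' r' s', ← B2_apply, Module.Basis.repr_self]
        simp only [Finsupp.single_apply, Prod.ext_iff, Sigma.mk.inj_iff, heq_eq_eq,
          Prod.mk.injEq, true_and, and_true]
      · rw [if_neg hsu, TensorProduct.tmul_zero, map_zero,
          ← basisS_apply j' r' s', ← B2_apply, Module.Basis.repr_self]
        simp [Finsupp.single_apply, Prod.ext_iff, Sigma.mk.inj_iff, hsu]
    · rw [E_mul_ne hj, TensorProduct.tmul_zero, map_zero,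
        ← basisS_apply j' r' s', ← B2_apply, Module.Basis.repr_self]
      simp [Finsupp.single_apply, Prod.ext_iff, Sigma.mk.inj_iff, hj]
  exact LinearMap.congr_fun h x

lemma reprR1 (x : MatS k d ⊗[ℂ] MatS k d) (j : Fin k) (u s q : Fin (d j)) (t₂ : KI k d) :
    (B2 k d).repr ((E k d j u s ⊗ₜ[ℂ] (1 : MatS k d)) * x) (⟨j, (u, q)⟩, t₂)
      = (B2 k d).repr x (⟨j, (s, q)⟩, t₂) := by
  have h : (Finsupp.lapply (((⟨j, (u, q)⟩ : KI k d), t₂) : KI k d × KI k d) : _ →ₗ[ℂ] ℂ)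
        ∘ₗ ((B2 k d).repr : MatS k d ⊗[ℂ] MatS k d ≃ₗ[ℂ] _).toLinearMap
        ∘ₗ LinearMap.mulLeft ℂ (E k d j u s ⊗ₜ[ℂ] (1 : MatS k d))
      = (Finsupp.lapply ((⟨j, (s, q)⟩ : KI k d), t₂) : _ →ₗ[ℂ] ℂ)
        ∘ₗ ((B2 k d).repr : MatS k d ⊗[ℂ] MatS k d ≃ₗ[ℂ] _).toLinearMap := by
    apply Module.Basis.ext (B2 k d)
    rintro ⟨⟨i', p', q'⟩, t₂'⟩
    simp only [LinearMap.coe_comp, Function.comp_apply, LinearMap.mulLeft_apply,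
      LinearEquiv.coe_coe, Finsupp.lapply_apply]
    rw [B2_apply, Algebra.TensorProduct.tmul_mul_tmul, one_mul]
    rw [show basisS k d ⟨i', (p', q')⟩ = E k d i' p' q' from basisS_apply i' p' q']
    rcases eq_or_ne i' j with rfl | hi
    · rw [E_mul_same]
      by_cases hsp : s = p'
      · subst hsp
        rw [if_pos rfl, ← basisS_apply i' u q', ← B2_apply, Module.Basis.repr_self,
          ← basisS_apply i' s q', ← B2_apply, Module.Basis.repr_self]
        simp only [Finsupp.single_apply, Prod.ext_iff, Sigma.mk.inj_iff, heq_eq_eq,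
          Prod.mk.injEq, true_and, and_true]
      · rw [if_neg hsp, TensorProduct.zero_tmul, map_zero,
          ← basisS_apply i' p' q', ← B2_apply, Module.Basis.repr_self]
        simp [Finsupp.single_apply, Prod.ext_iff, Sigma.mk.inj_iff, Ne.symm hsp]
    · rw [E_mul_ne (Ne.symm hi), TensorProduct.zero_tmul, map_zero,
        ← basisS_apply i' p' q', ← B2_apply, Module.Basis.repr_self]
      simp [Finsupp.single_apply, Prod.ext_iff, Sigma.mk.inj_iff, hi]
  exact LinearMap.congr_fun h x

lemma reprR0a (x : MatS k d ⊗[ℂ] MatS k d) {i j : Fin k} (hij : i ≠ j)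
    (u s : Fin (d j)) (p q : Fin (d i)) (t₂ : KI k d) :
    (B2 k d).repr ((E k d j u s ⊗ₜ[ℂ] (1 : MatS k d)) * x) (⟨i, (p, q)⟩, t₂) = 0 := by
  have h : (Finsupp.lapply (((⟨i, (p, q)⟩ : KI k d), t₂) : KI k d × KI k d) : _ →ₗ[ℂ] ℂ)
        ∘ₗ ((B2 k d).repr : MatS k d ⊗[ℂ] MatS k d ≃ₗ[ℂ] _).toLinearMap
        ∘ₗ LinearMap.mulLeft ℂ (E k d j u s ⊗ₜ[ℂ] (1 : MatS k d))
      = 0 := by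
    apply Module.Basis.ext (B2 k d)
    rintro ⟨⟨i', p', q'⟩, t₂'⟩
    simp only [LinearMap.coe_comp, Function.comp_apply, LinearMap.mulLeft_apply,
      LinearEquiv.coe_coe, Finsupp.lapply_apply, LinearMap.zero_apply]
    rw [B2_apply, Algebra.TensorProduct.tmul_mul_tmul, one_mul]
    rw [show basisS k d ⟨i', (p', q')⟩ = E k d i' p' q' from basisS_apply i' p' q']
    rcases eq_or_ne i' j with rfl | hi
    · rw [E_mul_same]
      by_cases hsp : s = p'
      · subst hsp
        rw [if_pos rfl, ← basisS_apply i' u q', ← B2_apply, Module.Basis.repr_self]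
        simp [Finsupp.single_apply, Prod.ext_iff, Sigma.mk.inj_iff, Ne.symm hij]
      · rw [if_neg hsp, TensorProduct.zero_tmul, map_zero]
        simp
    · rw [E_mul_ne (Ne.symm hi), TensorProduct.zero_tmul, map_zero]
      simp
  exact LinearMap.congr_fun h x

lemma reprR0b (x : MatS k d ⊗[ℂ] MatS k d) (j : Fin k) (u s p q : Fin (d j)) (hpu : p ≠ u)
    (t₂ : KI k d) :
    (B2 k d).repr ((E k d j u s ⊗ₜ[ℂ] (1 : MatS k d)) * x) (⟨j, (p, q)⟩, t₂) = 0 := by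
  have h : (Finsupp.lapply (((⟨j, (p, q)⟩ : KI k d), t₂) : KI k d × KI k d) : _ →ₗ[ℂ] ℂ)
        ∘ₗ ((B2 k d).repr : MatS k d ⊗[ℂ] MatS k d ≃ₗ[ℂ] _).toLinearMap
        ∘ₗ LinearMap.mulLeft ℂ (E k d j u s ⊗ₜ[ℂ] (1 : MatS k d))
      = 0 := by
    apply Module.Basis.ext (B2 k d)
    rintro ⟨⟨i', p', q'⟩, t₂'⟩
    simp only [LinearMap.coe_comp, Function.comp_apply, LinearMap.mulLeft_apply,
      LinearEquiv.coe_coe, Finsupp.lapply_apply, LinearMap.zero_apply]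
    rw [B2_apply, Algebra.TensorProduct.tmul_mul_tmul, one_mul]
    rw [show basisS k d ⟨i', (p', q')⟩ = E k d i' p' q' from basisS_apply i' p' q']
    rcases eq_or_ne i' j with rfl | hi
    · rw [E_mul_same]
      by_cases hsp : s = p'
      · subst hsp
        rw [if_pos rfl, ← basisS_apply i' u q', ← B2_apply, Module.Basis.repr_self]
        simp [Finsupp.single_apply, Prod.ext_iff, Sigma.mk.inj_iff, Ne.symm hpu]
      · rw [if_neg hsp, TensorProduct.zero_tmul, map_zero]
        simp
    · rw [E_mul_ne (Ne.symm hi), TensorProduct.zero_tmul, map_zero]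
      simp
  exact LinearMap.congr_fun h x


lemma g_mem_Kker (i : Fin k) (a b : Fin (d i)) : g k d i a b ∈ Kker k d := by
  have key : (LinearMap.mulLeft ℂ (g k d i a b)).comp
        ((TensorProduct.mk ℂ (MatS k d) (MatS k d)) 1)
      = (LinearMap.mulRight ℂ (g k d i a b)).comp
        ((TensorProduct.mk ℂ (MatS k d) (MatS k d)).flip 1) := by
    apply Module.Basis.ext (basisS k d)
    rintro ⟨j, u, v⟩
    simp only [LinearMap.comp_apply, TensorProduct.mk_apply, LinearMap.flip_apply,
      LinearMap.mulLeft_apply, LinearMap.mulRight_apply, basisS_apply]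
    rw [g, Finset.sum_mul, Finset.mul_sum]
    rcases eq_or_ne i j with rfl | hij
    · simp only [Algebra.TensorProduct.tmul_mul_tmul, mul_one, one_mul, E_mul_same,
        TensorProduct.tmul_ite, TensorProduct.ite_tmul, TensorProduct.tmul_zero,
        TensorProduct.zero_tmul]
      rw [Finset.sum_ite_eq' Finset.univ u fun p => E k d i p b ⊗ₜ[ℂ] E k d i a v,
        Finset.sum_ite_eq Finset.univ v fun p => E k d i u b ⊗ₜ[ℂ] E k d i a p]
      simp
    · simp only [Algebra.TensorProduct.tmul_mul_tmul, mul_one, one_mul, E_mul_ne hij,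
        E_mul_ne (Ne.symm hij), TensorProduct.tmul_zero, TensorProduct.zero_tmul,
        Finset.sum_const_zero]
  intro y
  exact LinearMap.congr_fun key y

lemma repr_g_apply (i : Fin k) (a b : Fin (d i)) (T : KI k d × KI k d) :
    (B2 k d).repr (g k d i a b) T
      = ∑ p : Fin (d i),
          if ((⟨i, (p, b)⟩ : KI k d), (⟨i, (a, p)⟩ : KI k d)) = T then (1 : ℂ) else 0 := by
  rw [repr_g, Finsupp.finset_sum_apply]
  exact Finset.sum_congr rfl fun p _ => Finsupp.single_apply

lemma g_indep : LinearIndependent ℂ (fun t : KI k d => g k d t.1 t.2.1 t.2.2) := by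
  rw [Fintype.linearIndependent_iff]
  intro c hc t
  obtain ⟨i, a, b⟩ := t
  have h := congrArg (fun z => (B2 k d).repr z ((⟨i, (b, b)⟩ : KI k d), (⟨i, (a, b)⟩ : KI k d))) hc
  simp only [map_sum, map_smul, Finsupp.coe_finset_sum, Finset.sum_apply, Finsupp.smul_apply,
    repr_g_apply, map_zero, Finsupp.coe_zero, Pi.zero_apply, smul_eq_mul] at h
  rw [Finset.sum_eq_single (⟨i, (a, b)⟩ : KI k d)] at h
  · rw [Finset.sum_eq_single b] at h
    · simpa using h
    · intro p _ hp
      rw [if_neg]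
      intro hEq
      simp only [Prod.mk.injEq, Sigma.mk.inj_iff, heq_eq_eq, Prod.mk.injEq, true_and] at hEq
      exact hp hEq.1.1
    · intro habs; exact absurd (Finset.mem_univ b) habs
  · rintro ⟨i', a', b'⟩ _ ht
    rw [Finset.sum_eq_zero, mul_zero]
    intro p _
    rw [if_neg]
    intro hEq
    simp only [Prod.mk.injEq, Sigma.mk.inj_iff] at hEq
    obtain ⟨⟨rfl, h2⟩, ⟨-, h4⟩⟩ := hEq
    rw [heq_eq_eq, Prod.mk.injEq] at h2 h4
    exact ht (by simp [h2.2, h4.1])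
  · intro habs; exact absurd (Finset.mem_univ _) habs


lemma Kker_le_span (x : MatS k d ⊗[ℂ] MatS k d) (hx : x ∈ Kker k d) :
    x ∈ Submodule.span ℂ (Set.range fun t : KI k d => g k d t.1 t.2.1 t.2.2) := by
  have hx' : ∀ y : MatS k d, x * ((1 : MatS k d) ⊗ₜ[ℂ] y) = (y ⊗ₜ[ℂ] (1 : MatS k d)) * x := hx
  set c : KI k d × KI k d →₀ ℂ := (B2 k d).repr x with hc
  have fact1 : ∀ (i j : Fin k) (p q : Fin (d i)) (r u : Fin (d j)), i ≠ j →
      c (⟨i, (p, q)⟩, ⟨j, (r, u)⟩) = 0 := by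
    intro i j p q r u hij
    have h := congrArg
      (fun z => (B2 k d).repr z ((⟨i, (p, q)⟩ : KI k d), (⟨j, (r, r)⟩ : KI k d)))
      (hx' (E k d j u r))
    rw [reprL, reprR0a x hij] at h
    exact h
  have fact2 : ∀ (i : Fin k) (p q r u s : Fin (d i)),
      c (⟨i, (p, q)⟩, ⟨i, (r, u)⟩) = if p = u then c (⟨i, (s, q)⟩, ⟨i, (r, s)⟩) else 0 := by
    intro i p q r u s
    have h := congrArg
      (fun z => (B2 k d).repr z ((⟨i, (p, q)⟩ : KI k d), (⟨i, (r, s)⟩ : KI k d)))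
      (hx' (E k d i u s))
    rw [reprL] at h
    by_cases hpu : p = u
    · subst hpu
      rw [reprR1] at h
      rw [if_pos rfl]
      exact h
    · rw [reprR0b x i u s p q hpu] at h
      rw [if_neg hpu]
      exact h
  have hxeq : x = ∑ t : KI k d,
      c (⟨t.1, (t.2.2, t.2.2)⟩, ⟨t.1, (t.2.1, t.2.2)⟩) • g k d t.1 t.2.1 t.2.2 := by
    apply (B2 k d).repr.injective
    ext T
    rw [map_sum, Finsupp.finset_sum_apply]
    obtain ⟨⟨i₀, p₀, q₀⟩, ⟨j₀, r₀, s₀⟩⟩ := T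
    have hterm : ∀ t : KI k d, (B2 k d).repr
        (c (⟨t.1, (t.2.2, t.2.2)⟩, ⟨t.1, (t.2.1, t.2.2)⟩) • g k d t.1 t.2.1 t.2.2)
        ((⟨i₀, (p₀, q₀)⟩ : KI k d), (⟨j₀, (r₀, s₀)⟩ : KI k d))
        = c (⟨t.1, (t.2.2, t.2.2)⟩, ⟨t.1, (t.2.1, t.2.2)⟩)
          * ∑ p : Fin (d t.1),
              if ((⟨t.1, (p, t.2.2)⟩ : KI k d), (⟨t.1, (t.2.1, p)⟩ : KI k d))
                = ((⟨i₀, (p₀, q₀)⟩ : KI k d), (⟨j₀, (r₀, s₀)⟩ : KI k d)) then (1 : ℂ) else 0 := by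
      intro t
      rw [map_smul, Finsupp.smul_apply, repr_g_apply, smul_eq_mul]
    rw [Finset.sum_congr rfl fun t _ => hterm t]
    rcases eq_or_ne i₀ j₀ with rfl | hne
    · rw [show ((B2 k d).repr x) (⟨i₀, (p₀, q₀)⟩, ⟨i₀, (r₀, s₀)⟩)
          = c (⟨i₀, (p₀, q₀)⟩, ⟨i₀, (r₀, s₀)⟩) from rfl,
        fact2 i₀ p₀ q₀ r₀ s₀ q₀]
      rw [Finset.sum_eq_single (⟨i₀, (r₀, q₀)⟩ : KI k d)]
      · by_cases hps : p₀ = s₀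
        · subst hps
          rw [if_pos rfl, Finset.sum_eq_single p₀]
          · rw [if_pos rfl, mul_one]
          · intro p _ hp
            rw [if_neg]
            intro hEq
            simp only [Prod.mk.injEq, Sigma.mk.inj_iff, heq_eq_eq, true_and] at hEq
            exact hp hEq.1.1
          · intro habs; exact absurd (Finset.mem_univ _) habs
        · rw [if_neg hps, Finset.sum_eq_zero, mul_zero]
          intro p _
          rw [if_neg]
          intro hEq
          simp only [Prod.mk.injEq, Sigma.mk.inj_iff, heq_eq_eq, true_and, and_true] at hEq
          exact hps (hEq.1.symm.trans hEq.2)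
      · rintro ⟨i, r, q⟩ _ ht
        rw [Finset.sum_eq_zero, mul_zero]
        intro p _
        rw [if_neg]
        intro hEq
        simp only [Prod.mk.injEq, Sigma.mk.inj_iff] at hEq
        obtain ⟨⟨rfl, h2⟩, -, h4⟩ := hEq
        rw [heq_eq_eq, Prod.mk.injEq] at h2 h4
        exact ht (by simp [h2.2, h4.1])
      · intro habs; exact absurd (Finset.mem_univ _) habs
    · rw [show ((B2 k d).repr x) (⟨i₀, (p₀, q₀)⟩, ⟨j₀, (r₀, s₀)⟩)
          = c (⟨i₀, (p₀, q₀)⟩, ⟨j₀, (r₀, s₀)⟩) from rfl,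
        fact1 i₀ j₀ p₀ q₀ r₀ s₀ hne, Finset.sum_eq_zero]
      rintro ⟨i, r, q⟩ _
      rw [Finset.sum_eq_zero, mul_zero]
      intro p _
      rw [if_neg]
      intro hEq
      simp only [Prod.mk.injEq, Sigma.mk.inj_iff] at hEq
      exact hne (hEq.1.1.symm.trans hEq.2.1)
  rw [hxeq]
  exact Submodule.sum_mem _ fun t _ =>
    Submodule.smul_mem _ _ (Submodule.subset_span ⟨t, rfl⟩)

end Aux

/-- The kernel of `D : S ⊗ S → DDer(S)` is spanned by the linearly
independent elements `g^i_{ab} = ∑_p e^i_{pb} ⊗ e^i_{ap}`; hence it has dimension `∑ d i ^ 2`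
and is isomorphic, as a ℂ-vector space, to `M_{d 1}(ℂ) ⊕ ⋯ ⊕ M_{d k}(ℂ)`. -/
theorem kernel_of_inner_double_derivations (k : ℕ) (d : Fin k → ℕ) :
    Kker k d = Submodule.span ℂ
        (Set.range fun t : Σ i : Fin k, Fin (d i) × Fin (d i) => g k d t.1 t.2.1 t.2.2) ∧
    LinearIndependent ℂ
      (fun t : Σ i : Fin k, Fin (d i) × Fin (d i) => g k d t.1 t.2.1 t.2.2) ∧
    Module.finrank ℂ ↥(Kker k d) = ∑ i, d i ^ 2 ∧
    Nonempty (↥(Kker k d) ≃ₗ[ℂ] MatS k d) := by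
  have hspan : Kker k d = Submodule.span ℂ
      (Set.range fun t : KI k d => g k d t.1 t.2.1 t.2.2) := by
    apply le_antisymm
    · intro x hx
      exact Kker_le_span x hx
    · rw [Submodule.span_le]
      rintro _ ⟨t, rfl⟩
      exact g_mem_Kker t.1 t.2.1 t.2.2
  have hrank : Module.finrank ℂ ↥(Kker k d) = ∑ i, d i ^ 2 := by
    refine Eq.trans (congrArg
      (fun p : Submodule ℂ (MatS k d ⊗[ℂ] MatS k d) => Module.finrank ℂ ↥p) hspan) ?_
    rw [finrank_span_eq_card g_indep]
    simp [Fintype.card_sigma, sq]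
  refine ⟨hspan, g_indep, hrank, ?_⟩
  have h1 : Module.finrank ℂ ↥(Kker k d) = Module.finrank ℂ (MatS k d) := by
    rw [hrank, Module.finrank_pi_fintype ℂ]
    simp [Module.finrank_matrix, sq]
  exact ⟨LinearEquiv.ofFinrankEq _ _ h1⟩

end
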